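/- Let x be a point of ℝ¹² with coordinates (m₁, g₁, I₁, e₁, P₁, q₁, m₂, g₂, I₂, e₂, P₂, q₂) such that m₁ ≠ 0 and m₂ ≠ 0. Then there exist real numbers ν₁, ν₂, a, b, c such that the covector d(m₁e₁ + m₂e₂) + ν₁ω₁ + ν₂ω₂ + a·d(m₁+m₂) + b·d(m₁g₁+m₂g₂) + c·d(m₁q₁+m₂q₂) vanishes at x if and only if I₁ = I₂ ≠ 0, P₁ = P₂, and g₁ + P₁q₁ − I₁e₁ = g₂ + P₂q₂ − I₂e₂ (equality of the economic Gibbs potentials μ = g + Pq − Ie of the two phases). -/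
import Mathlib


/- Coordinates on ℝ¹²:
   0 = m₁, 1 = g₁, 2 = I₁, 3 = e₁, 4 = P₁, 5 = q₁,
   6 = m₂, 7 = g₂, 8 = I₂, 9 = e₂, 10 = P₂, 11 = q₂. -/

/-- Gibbs–Pfaff covector of phase 1 at the point `x`:
`ω₁ = dg₁ − I₁(x) de₁ + P₁(x) dq₁`. -/
noncomputable def ω₁ (x : Fin 12 → ℝ) : (Fin 12 → ℝ) → ℝ :=
  fun v => v 1 - x 2 * v 3 + x 4 * v 5

/-- Gibbs–Pfaff covector of phase 2 at the point `x`: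
`ω₂ = dg₂ − I₂(x) de₂ + P₂(x) dq₂`. -/
noncomputable def ω₂ (x : Fin 12 → ℝ) : (Fin 12 → ℝ) → ℝ :=
  fun v => v 7 - x 8 * v 9 + x 10 * v 11

/-- At a point `x ∈ ℝ¹²` with `m₁ ≠ 0` and `m₂ ≠ 0`, there exist multipliers
`ν₁, ν₂, a, b, c` making the covector
`d(m₁e₁+m₂e₂) + ν₁ω₁ + ν₂ω₂ + a d(m₁+m₂) + b d(m₁g₁+m₂g₂) + c d(m₁q₁+m₂q₂)`
vanish at `x` if and only if `I₁ = I₂ ≠ 0`, `P₁ = P₂`, and the economic Gibbs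
potentials `μ = g + Pq − Ie` of the two phases coincide. -/

lemma fd_mul2 (x : Fin 12 → ℝ) (i j k l : Fin 12) (v : Fin 12 → ℝ) :
    fderiv ℝ (fun y : Fin 12 → ℝ => y i * y j + y k * y l) x v
      = x j * v i + x i * v j + x l * v k + x k * v l := by
  have h : HasFDerivAt (fun y : Fin 12 → ℝ => y i * y j + y k * y l)
      ((x i • (ContinuousLinearMap.proj j : (Fin 12 → ℝ) →L[ℝ] ℝ)
        + x j • (ContinuousLinearMap.proj i : (Fin 12 → ℝ) →L[ℝ] ℝ))
       + (x k • (ContinuousLinearMap.proj l : (Fin 12 → ℝ) →L[ℝ] ℝ)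
        + x l • (ContinuousLinearMap.proj k : (Fin 12 → ℝ) →L[ℝ] ℝ))) x :=
    ((hasFDerivAt_apply i x).mul (hasFDerivAt_apply j x)).add
      ((hasFDerivAt_apply k x).mul (hasFDerivAt_apply l x))
  rw [h.fderiv]
  simp [ContinuousLinearMap.proj]
  ring

lemma fd_add2 (x : Fin 12 → ℝ) (i j : Fin 12) (v : Fin 12 → ℝ) :
    fderiv ℝ (fun y : Fin 12 → ℝ => y i + y j) x v = v i + v j := by
  have h : HasFDerivAt (fun y : Fin 12 → ℝ => y i + y j)
      ((ContinuousLinearMap.proj i : (Fin 12 → ℝ) →L[ℝ] ℝ)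
        + (ContinuousLinearMap.proj j : (Fin 12 → ℝ) →L[ℝ] ℝ)) x :=
    (hasFDerivAt_apply i x).add (hasFDerivAt_apply j x)
  rw [h.fderiv]
  simp [ContinuousLinearMap.proj]


theorem phase_equilibrium (x : Fin 12 → ℝ) (hm₁ : x 0 ≠ 0) (hm₂ : x 6 ≠ 0) :
    (∃ ν₁ ν₂ a b c : ℝ, ∀ v : Fin 12 → ℝ,
        fderiv ℝ (fun y : Fin 12 → ℝ => y 0 * y 3 + y 6 * y 9) x v
          + ν₁ * ω₁ x v + ν₂ * ω₂ x v
          + a * fderiv ℝ (fun y : Fin 12 → ℝ => y 0 + y 6) x v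
          + b * fderiv ℝ (fun y : Fin 12 → ℝ => y 0 * y 1 + y 6 * y 7) x v
          + c * fderiv ℝ (fun y : Fin 12 → ℝ => y 0 * y 5 + y 6 * y 11) x v
          = 0) ↔
    (x 2 = x 8 ∧ x 2 ≠ 0 ∧ x 4 = x 10 ∧
      x 1 + x 4 * x 5 - x 2 * x 3 = x 7 + x 10 * x 11 - x 8 * x 9) := by
  simp only [fd_mul2, fd_add2, ω₁, ω₂]
  constructor
  · rintro ⟨ν₁, ν₂, a, b, c, h⟩
    have E0 := h (Pi.single 0 1)
    have E1 := h (Pi.single 1 1)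
    have E3 := h (Pi.single 3 1)
    have E5 := h (Pi.single 5 1)
    have E6 := h (Pi.single 6 1)
    have E7 := h (Pi.single 7 1)
    have E9 := h (Pi.single 9 1)
    have E11 := h (Pi.single 11 1)
    simp [Pi.single_apply] at E0 E1 E3 E5 E6 E7 E9 E11
    -- E3 : x 0 - ν₁ * x 2 = 0 etc (forms may vary; inspect)
    have hx2 : x 2 ≠ 0 := by
      intro h2
      rw [h2] at E3
      simp at E3
      exact hm₁ E3
    have hx8 : x 8 ≠ 0 := by
      intro h8
      rw [h8] at E9
      simp at E9
      exact hm₂ E9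
    have hb1 : b * x 2 = -1 := by
      have hν : ν₁ = -(b * x 0) := by linarith
      rw [hν] at E3
      have h' : x 0 * (1 + b * x 2) = 0 := by linear_combination E3
      have := (mul_eq_zero.1 h').resolve_left hm₁
      linarith
    have hb2 : b * x 8 = -1 := by
      have hν : ν₂ = -(b * x 6) := by linarith
      rw [hν] at E9
      have h' : x 6 * (1 + b * x 8) = 0 := by linear_combination E9
      have := (mul_eq_zero.1 h').resolve_left hm₂
      linarith
    have hbne : b ≠ 0 := by
      intro hb; rw [hb] at hb1; norm_num at hb1
    have h28 : x 2 = x 8 := by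
      have := hb1.trans hb2.symm
      exact mul_left_cancel₀ hbne this
    have hc1 : x 4 = -(c * x 2) := by
      -- E1: ν₁ + b * x 0 = 0, E5 : ν₁ * x 4 + c * x 0 = 0, E3: x 0 = ν₁ * x 2
      have hν : ν₁ = x 0 / x 2 := by field_simp; linarith
      rw [hν] at E5
      field_simp at E5
      have h' : x 0 * (x 4 + c * x 2) = 0 := by linear_combination E5
      have := (mul_eq_zero.1 h').resolve_left hm₁
      linarith
    have hc2 : x 10 = -(c * x 8) := by
      have hν : ν₂ = x 6 / x 8 := by field_simp; linarith
      rw [hν] at E11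
      field_simp at E11
      have h' : x 6 * (x 10 + c * x 8) = 0 := by linear_combination E11
      have := (mul_eq_zero.1 h').resolve_left hm₂
      linarith
    refine ⟨h28, hx2, by rw [hc1, hc2, h28], ?_⟩
    -- E0 : x 3 + a + b * x 1 + c * x 5 = 0 ; E6 likewise
    have hb' : b = -(1 / x 2) := by field_simp; linarith
    have : x 3 + b * x 1 + c * x 5 = x 9 + b * x 7 + c * x 11 := by linarith
    rw [hb'] at this
    have hc1' : c = -(x 4 / x 2) := by field_simp; linarith
    have hc2' : c = -(x 10 / x 8) := by field_simp; linarith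
    rw [hc1'] at this
    field_simp at this
    have h410 : x 4 = x 10 := by rw [hc1, hc2, h28]
    linear_combination -this + x 11 * h410 - x 9 * h28
  · rintro ⟨h28, hx2, h410, hG⟩
    refine ⟨x 0 / x 2, x 6 / x 2, (x 1 + x 4 * x 5) / x 2 - x 3, -(1 / x 2), -(x 4 / x 2), fun v => ?_⟩
    rw [← h28, ← h410] at hG ⊢
    field_simp
    linear_combination v 6 * hG
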